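/- Stability of the backward Euler CQ scheme for a scalar mode: fix λ > 0, 0 < α < 1 and τ > 0, let b_j = (-1)^j (α choose j) and define U^0 = v ∈ ℝ and, for n ≥ 1, τ^{-α} ∑_{j=0}^n b_j (U^{n-j} - v) + λ U^n = 0. Then 0 < U^n ≤ v for all n ≥ 0 whenever v > 0, and the sequence (U^n) is nonincreasing. -/

import Mathlib

noncomputable def genBinom (α : ℝ) (j : ℕ) : ℝ :=
  (∏ i ∈ Finset.range j, (α - i)) / (Nat.factorial j)

/-- Stability of the backward Euler convolution quadrature scheme for
`∂_t^α u + λ u = 0`, `u(0) = v > 0`: the discrete solution stays in `(0, v]`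
and is nonincreasing. -/
theorem stmt18 (α lam τ v : ℝ) (hα0 : 0 < α) (hα1 : α < 1) (hlam : 0 < lam)
    (hτ : 0 < τ) (hv : 0 < v)
    (b : ℕ → ℝ) (hb : ∀ j, b j = (-1) ^ j * genBinom α j)
    (U : ℕ → ℝ) (hU0 : U 0 = v)
    (hrec : ∀ n : ℕ, 1 ≤ n →
      τ ^ (-α) * (∑ j ∈ Finset.range (n + 1), b j * (U (n - j) - v)) + lam * U n = 0) :
    (∀ n, 0 < U n ∧ U n ≤ v) ∧ ∀ n, U (n + 1) ≤ U n := by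
  set c : ℝ := τ ^ (-α) with hc_def
  have hc : 0 < c := Real.rpow_pos_of_pos hτ _
  set q : ℕ → ℝ := fun n => ∏ i ∈ Finset.range n, (α - 1 - i) with hq_def
  -- positivity of (-1)^n q n
  have Qpos : ∀ n, 0 < (-1 : ℝ) ^ n * q n := by
    intro n
    induction n with
    | zero => simp [hq_def]
    | succ n ih =>
      have hq : q (n + 1) = q n * (α - 1 - n) := Finset.prod_range_succ _ n
      have h1 : (0 : ℝ) < 1 + n - α := by
        have : (0 : ℝ) ≤ (n : ℝ) := Nat.cast_nonneg n
        linarith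
      have : (-1 : ℝ) ^ (n + 1) * q (n + 1) = ((-1 : ℝ) ^ n * q n) * (1 + n - α) := by
        rw [hq, pow_succ]; ring
      rw [this]
      exact mul_pos ih h1
  -- product identity: ∏_{i<n+1}(α-i) = α * q n
  have pq : ∀ n, ∏ i ∈ Finset.range (n + 1), (α - i) = α * q n := by
    intro n
    rw [Finset.prod_range_succ']
    have : ∀ i ∈ Finset.range n, (α - ((i : ℕ) + 1 : ℕ)) = α - 1 - i := by
      intro i _; push_cast; ring
    rw [Finset.prod_congr rfl this]
    simp [hq_def, mul_comm]
  have hb0 : b 0 = 1 := by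
    rw [hb]; simp [genBinom]
  have hfac : ∀ n : ℕ, (0 : ℝ) < (Nat.factorial n : ℝ) := by
    intro n; exact_mod_cast Nat.factorial_pos n
  -- b (i+1) < 0
  have hbneg : ∀ i : ℕ, b (i + 1) < 0 := by
    intro i
    have h1 : b (i + 1) = -(((-1 : ℝ) ^ i * q i) * α / ((i + 1).factorial : ℝ)) := by
      rw [hb, genBinom, pq, pow_succ]; ring
    rw [h1, neg_lt_zero]
    exact div_pos (mul_pos (Qpos i) hα0) (hfac _)
  -- partial sum identity
  have hSum : ∀ n, ∑ j ∈ Finset.range (n + 1), b j = (-1 : ℝ) ^ n * q n / (n.factorial : ℝ) := by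
    intro n
    induction n with
    | zero => simp [hb0, hq_def]
    | succ n ih =>
      rw [Finset.sum_range_succ, ih, hb, genBinom, pq]
      have hq : q (n + 1) = q n * (α - 1 - n) := Finset.prod_range_succ _ n
      have hf : ((n + 1).factorial : ℝ) = ((n : ℝ) + 1) * (n.factorial : ℝ) := by
        rw [Nat.factorial_succ]; push_cast; ring
      have h0 : (n.factorial : ℝ) ≠ 0 := ne_of_gt (hfac n)
      have h1 : ((n : ℝ) + 1) ≠ 0 := by positivity
      rw [hq, hf, pow_succ]
      field_simp
      ring
  have hSpos : ∀ n, 0 < ∑ j ∈ Finset.range (n + 1), b j := by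
    intro n; rw [hSum]; exact div_pos (Qpos n) (hfac n)
  -- rearranged recursion
  have key : ∀ n : ℕ, 1 ≤ n →
      (c + lam) * U n = c * (∑ i ∈ Finset.range n, (-(b (i + 1))) * U (n - (i + 1)))
        + c * (∑ j ∈ Finset.range (n + 1), b j) * v := by
    intro n hn
    have h := hrec n hn
    have e1 : (∑ j ∈ Finset.range (n + 1), b j * (U (n - j) - v))
        = ∑ i ∈ Finset.range n, b (i + 1) * (U (n - (i + 1)) - v) + b 0 * (U (n - 0) - v) :=
      Finset.sum_range_succ' (fun j => b j * (U (n - j) - v)) n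
    have e2 : ∑ i ∈ Finset.range n, b (i + 1) * (U (n - (i + 1)) - v)
        = -(∑ i ∈ Finset.range n, (-(b (i + 1))) * U (n - (i + 1)))
          - (∑ i ∈ Finset.range n, b (i + 1)) * v := by
      rw [Finset.sum_mul, ← Finset.sum_neg_distrib, ← Finset.sum_sub_distrib]
      exact Finset.sum_congr rfl fun i _ => by ring
    have e3 : ∑ j ∈ Finset.range (n + 1), b j
        = ∑ i ∈ Finset.range n, b (i + 1) + b 0 := Finset.sum_range_succ' b n
    rw [e1, e2, hb0, Nat.sub_zero] at h
    rw [e3, hb0]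
    linarith [h]
  -- main bounds
  have main : ∀ n, 0 < U n ∧ U n ≤ v := by
    intro n
    induction n using Nat.strong_induction_on with
    | _ n ih =>
      rcases Nat.eq_zero_or_pos n with h0 | hn
      · subst h0; rw [hU0]; exact ⟨hv, le_refl v⟩
      · have hk := key n hn
        set A := ∑ i ∈ Finset.range n, (-(b (i + 1))) * U (n - (i + 1)) with hA_def
        set S := ∑ j ∈ Finset.range (n + 1), b j with hS_def
        have hSp : 0 < S := hSpos n
        have hA_nonneg : 0 ≤ A := by
          apply Finset.sum_nonneg
          intro i hi
          have hlt : n - (i + 1) < n := Nat.sub_lt hn (Nat.succ_pos i)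
          exact le_of_lt (mul_pos (neg_pos.mpr (hbneg i)) (ih _ hlt).1)
        have hA_le : A ≤ (∑ i ∈ Finset.range n, -(b (i + 1))) * v := by
          rw [Finset.sum_mul]
          apply Finset.sum_le_sum
          intro i hi
          have hlt : n - (i + 1) < n := Nat.sub_lt hn (Nat.succ_pos i)
          exact mul_le_mul_of_nonneg_left (ih _ hlt).2 (le_of_lt (neg_pos.mpr (hbneg i)))
        have e3 : S = ∑ i ∈ Finset.range n, b (i + 1) + b 0 := Finset.sum_range_succ' b n
        have e4 : ∑ i ∈ Finset.range n, -(b (i + 1)) = -(∑ i ∈ Finset.range n, b (i + 1)) :=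
          Finset.sum_neg_distrib _
        have hpos : 0 < U n := by
          have h1 : 0 < (c + lam) * U n := by
            rw [hk]
            have := mul_pos hc (mul_pos hSp hv)
            nlinarith [mul_nonneg hc.le hA_nonneg]
          by_contra hcon
          push_neg at hcon
          nlinarith
        refine ⟨hpos, ?_⟩
        have h2 : (c + lam) * U n ≤ c * v := by
          rw [hk]
          have h3 := mul_le_mul_of_nonneg_left hA_le hc.le
          rw [e4] at h3
          rw [e3, hb0]
          nlinarith
        nlinarith [mul_pos hc hv]
  refine ⟨main, ?_⟩
  -- monotonicity
  intro n
  induction n using Nat.strong_induction_on with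
  | _ n ih =>
    rcases Nat.eq_zero_or_pos n with h0 | hn
    · subst h0; rw [hU0]; exact (main 1).2
    · have k1 := key (n + 1) (by omega)
      have k2 := key n hn
      simp only [Nat.add_sub_add_right] at k1
      have hsplit : ∑ i ∈ Finset.range (n + 1), (-(b (i + 1))) * U (n - i)
          = ∑ i ∈ Finset.range n, (-(b (i + 1))) * U (n - i) + (-(b (n + 1))) * U (n - n) :=
        Finset.sum_range_succ _ n
      have hS1 : ∑ j ∈ Finset.range (n + 2), b j
          = ∑ j ∈ Finset.range (n + 1), b j + b (n + 1) := Finset.sum_range_succ b (n + 1)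
      rw [hsplit, hS1, Nat.sub_self, hU0] at k1
      have hBB' : ∑ i ∈ Finset.range n, (-(b (i + 1))) * U (n - i)
          ≤ ∑ i ∈ Finset.range n, (-(b (i + 1))) * U (n - (i + 1)) := by
        apply Finset.sum_le_sum
        intro i hi
        have hilt : i < n := Finset.mem_range.mp hi
        have hm := ih (n - (i + 1)) (by omega)
        have he : n - (i + 1) + 1 = n - i := by omega
        rw [he] at hm
        exact mul_le_mul_of_nonneg_left hm (le_of_lt (neg_pos.mpr (hbneg i)))
      have hle : (c + lam) * U (n + 1) ≤ (c + lam) * U n := by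
        have h3 := mul_le_mul_of_nonneg_left hBB' hc.le
        nlinarith
      have hcl : 0 < c + lam := by linarith
      exact le_of_mul_le_mul_left hle hcl
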